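/- Let ω be a weight, let f be a monic polynomial of degree d ≥ 1 with simple zeros, none in the open unit disk 𝔻 and at least one on the unit circle 𝕋, and let p_n be the n-th optimal polynomial approximant to 1/f in H²_ω. Then there exist δ > 0 and a strictly increasing sequence (n_k) of natural numbers such that for all k, the top coefficient of 1 − p_{n_k} f satisfies |coeff_{n_k+d}(1 − p_{n_k} f)| ≥ δ/(ω_{n_k+d}·S_{n_k+d}). -/

import Mathlib

open Polynomial Filter Topology MeasureTheory Metric Asymptotics

noncomputable section

/-- A weight: positive, monotone, ω₀ = 1, ω_n/ω_{n-⌊√n⌋} → 1, ∑ 1/ω_k = ∞. -/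
def IsWeight (ω : ℕ → ℝ) : Prop :=
  (∀ k, 0 < ω k) ∧ (Monotone ω ∨ Antitone ω) ∧ ω 0 = 1 ∧
    Filter.Tendsto (fun n => ω n / ω (n - Nat.sqrt n)) Filter.atTop (nhds 1) ∧
    ¬ Summable (fun k => 1 / ω k)

/-- Squared H²_ω norm of a polynomial. -/
def wNormSq (ω : ℕ → ℝ) (g : Polynomial ℂ) : ℝ :=
  ∑ k ∈ Finset.range (g.natDegree + 1), ω k * ‖g.coeff k‖ ^ 2

/-- `p` is the n-th optimal polynomial approximant to `1/f` in `H²_ω`. -/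
def IsOPA (ω : ℕ → ℝ) (f : Polynomial ℂ) (n : ℕ) (p : Polynomial ℂ) : Prop :=
  p.degree ≤ (n : ℕ) ∧ ∀ q : Polynomial ℂ, q.degree ≤ (n : ℕ) →
    wNormSq ω (1 - p * f) ≤ wNormSq ω (1 - q * f)

/-- Partial sums `S_N = ∑_{k=0}^N 1/ω_k`. -/
def S (ω : ℕ → ℝ) (N : ℕ) : ℝ := ∑ k ∈ Finset.range (N + 1), 1 / ω k

/-- Truncated reproducing kernel `k_N(z,b) = ∑_{k=0}^N b̄^k z^k / ω_k`. -/
def kN (ω : ℕ → ℝ) (N : ℕ) (z b : ℂ) : ℂ :=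
  ∑ k ∈ Finset.range (N + 1), (starRingEnd ℂ b) ^ k * z ^ k / (ω k : ℂ)

/-- Zero-counting probability measure of a polynomial: the average of Dirac
masses at its roots, counted with multiplicity. -/
def zeroMeasure (q : Polynomial ℂ) : Measure ℂ :=
  (q.natDegree : ENNReal)⁻¹ • (q.roots.map (fun z => Measure.dirac z)).sum

/-- Normalized arclength (uniform) measure on the unit circle. -/
def nuT : Measure ℂ :=
  (ENNReal.ofReal (2 * Real.pi))⁻¹ •
    Measure.map (fun θ : ℝ => Complex.exp (θ * Complex.I))
      (MeasureTheory.volume.restrict (Set.Ioc 0 (2 * Real.pi)))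


namespace OPAx
open Finset

variable (ω : ℕ → ℝ)

def vec (N : ℕ) (g : Polynomial ℂ) : EuclideanSpace ℂ (Fin N) :=
  WithLp.toLp 2 fun k => (Real.sqrt (ω k) : ℂ) * g.coeff k

lemma norm_vec_sq (hpos : ∀ k, 0 < ω k) (N : ℕ) (g : Polynomial ℂ) :
    ‖vec ω N g‖ ^ 2 = ∑ k ∈ range N, ω k * ‖g.coeff k‖ ^ 2 := by
  rw [EuclideanSpace.norm_eq, Real.sq_sqrt (by positivity)]
  have : ∀ i : Fin N, ‖vec ω N g i‖ ^ 2 = (fun k => ω k * ‖g.coeff k‖ ^ 2) i.1 := by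
    intro i
    show ‖(Real.sqrt (ω i.1) : ℂ) * g.coeff i.1‖ ^ 2 = _
    rw [norm_mul, Complex.norm_real, Real.norm_of_nonneg (Real.sqrt_nonneg _), mul_pow,
      Real.sq_sqrt (le_of_lt (hpos _))]
  rw [Finset.sum_congr rfl (fun i _ => this i)]
  exact Fin.sum_univ_eq_sum_range (fun k => ω k * ‖g.coeff k‖ ^ 2) N

lemma wNormSq_eq_sum (g : Polynomial ℂ) {N : ℕ} (hN : g.natDegree < N) :
    wNormSq ω g = ∑ k ∈ range N, ω k * ‖g.coeff k‖ ^ 2 := by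
  unfold wNormSq
  apply Finset.sum_subset (Finset.range_subset_range.2 hN)
  intro k _ hk
  rw [Finset.mem_range, not_lt] at hk
  rw [Polynomial.coeff_eq_zero_of_natDegree_lt (Nat.lt_of_succ_le hk)]
  simp

lemma wNormSq_eq_norm (hpos : ∀ k, 0 < ω k) (g : Polynomial ℂ) {N : ℕ} (hN : g.natDegree < N) :
    wNormSq ω g = ‖vec ω N g‖ ^ 2 := by
  rw [norm_vec_sq ω hpos, wNormSq_eq_sum ω g hN]

lemma wNormSq_nonneg (hpos : ∀ k, 0 < ω k) (g : Polynomial ℂ) : 0 ≤ wNormSq ω g :=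
  Finset.sum_nonneg fun k _ => mul_nonneg (hpos k).le (by positivity)

lemma vec_sub (N : ℕ) (g h : Polynomial ℂ) : vec ω N (g - h) = vec ω N g - vec ω N h := by
  ext k
  show (Real.sqrt (ω k.1) : ℂ) * (g - h).coeff k.1 = _
  rw [Polynomial.coeff_sub]
  show _ = (Real.sqrt (ω k.1) : ℂ) * g.coeff k.1 - (Real.sqrt (ω k.1) : ℂ) * h.coeff k.1
  ring

lemma vec_add (N : ℕ) (g h : Polynomial ℂ) : vec ω N (g + h) = vec ω N g + vec ω N h := by
  ext k
  show (Real.sqrt (ω k.1) : ℂ) * (g + h).coeff k.1 = _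
  rw [Polynomial.coeff_add]
  show _ = (Real.sqrt (ω k.1) : ℂ) * g.coeff k.1 + (Real.sqrt (ω k.1) : ℂ) * h.coeff k.1
  ring

lemma vec_smul (N : ℕ) (c : ℂ) (g : Polynomial ℂ) : vec ω N (Polynomial.C c * g) = c • vec ω N g := by
  ext k
  show (Real.sqrt (ω k.1) : ℂ) * (Polynomial.C c * g).coeff k.1 = c * ((Real.sqrt (ω k.1) : ℂ) * g.coeff k.1)
  rw [Polynomial.coeff_C_mul]
  ring

/-- triangle inequality for the weighted norm -/
lemma wNormSq_add_le (hpos : ∀ k, 0 < ω k) (g h : Polynomial ℂ) :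
    wNormSq ω (g + h) ≤ (Real.sqrt (wNormSq ω g) + Real.sqrt (wNormSq ω h)) ^ 2 := by
  set N := (g + h).natDegree + g.natDegree + h.natDegree + 1 with hNdef
  have h1 : (g + h).natDegree < N := by omega
  have h2 : g.natDegree < N := by omega
  have h3 : h.natDegree < N := by omega
  rw [wNormSq_eq_norm ω hpos _ h1, wNormSq_eq_norm ω hpos _ h2, wNormSq_eq_norm ω hpos _ h3,
    vec_add]
  rw [Real.sqrt_sq (norm_nonneg _), Real.sqrt_sq (norm_nonneg _)]
  have := norm_add_le (vec ω N g) (vec ω N h)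
  have hnn : (0:ℝ) ≤ ‖vec ω N g + vec ω N h‖ := norm_nonneg _
  nlinarith [norm_nonneg (vec ω N g), norm_nonneg (vec ω N h)]

lemma nrm_add_le (hpos : ∀ k, 0 < ω k) (g h : Polynomial ℂ) :
    Real.sqrt (wNormSq ω (g + h)) ≤ Real.sqrt (wNormSq ω g) + Real.sqrt (wNormSq ω h) := by
  have := wNormSq_add_le ω hpos g h
  calc Real.sqrt (wNormSq ω (g + h)) ≤ Real.sqrt ((Real.sqrt (wNormSq ω g) + Real.sqrt (wNormSq ω h)) ^ 2) :=
        Real.sqrt_le_sqrt this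
    _ = _ := Real.sqrt_sq (by positivity)



lemma wNormSq_zero : wNormSq ω 0 = 0 := by simp [wNormSq]

lemma S_pos (hpos : ∀ k, 0 < ω k) (N : ℕ) : 0 < S ω N := by
  unfold S
  apply Finset.sum_pos (fun k _ => div_pos one_pos (hpos k))
  exact ⟨0, Finset.mem_range.2 (Nat.succ_pos N)⟩

lemma S_succ (N : ℕ) : S ω (N + 1) = S ω N + 1 / ω (N + 1) := Finset.sum_range_succ _ _

lemma S_mono (hpos : ∀ k, 0 < ω k) : Monotone (S ω) := by
  apply monotone_nat_of_le_succ
  intro n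
  rw [S_succ]
  have : 0 < 1 / ω (n+1) := div_pos one_pos (hpos _)
  linarith

lemma S_tendsto (hpos : ∀ k, 0 < ω k) (hdiv : ¬ Summable (fun k => 1 / ω k)) :
    Tendsto (S ω) atTop atTop := by
  have h := (not_summable_iff_tendsto_nat_atTop_of_nonneg
    (f := fun k => 1 / ω k) (fun n => (div_pos one_pos (hpos n)).le)).1 hdiv
  have : (S ω) = (fun n => ∑ i ∈ range n, 1 / ω i) ∘ (fun N => N + 1) := rfl
  rw [this]
  exact h.comp (tendsto_add_atTop_nat 1)

lemma ratio_bound (hmono : Monotone ω ∨ Antitone ω) (hpos : ∀ k, 0 < ω k)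
    (hreg : Tendsto (fun n => ω n / ω (n - Nat.sqrt n)) atTop (nhds 1)) :
    ∃ K : ℝ, 1 ≤ K ∧ ∀ k, ω (k + 1) ≤ K * ω k := by
  rcases hmono with hmono | hanti
  · have hev : ∀ᶠ m in atTop, ω m / ω (m - Nat.sqrt m) < 2 :=
      hreg.eventually_lt_const (show (1:ℝ) < 2 by norm_num)
    obtain ⟨M, hM⟩ := eventually_atTop.1 hev
    have hnn0 : 0 ≤ ∑ k ∈ range M, ω (k + 1) / ω k :=
      Finset.sum_nonneg fun j _ => div_nonneg (hpos _).le (hpos _).le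
    refine ⟨2 + ∑ k ∈ range M, ω (k + 1) / ω k, by linarith, ?_⟩
    intro k
    by_cases hk : k < M
    · have h1 : ω (k + 1) / ω k ≤ ∑ j ∈ range M, ω (j + 1) / ω j :=
        Finset.single_le_sum (f := fun j => ω (j + 1) / ω j)
          (fun j _ => div_nonneg (hpos _).le (hpos _).le) (Finset.mem_range.2 hk)
      have h2 : ω (k + 1) = (ω (k + 1) / ω k) * ω k :=
        (div_mul_cancel₀ _ (hpos k).ne').symm
      rw [h2]
      apply mul_le_mul_of_nonneg_right _ (hpos k).le
      linarith
    · push_neg at hk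
      have hm : M ≤ k + 1 := le_trans hk (Nat.le_succ k)
      have h2 := hM (k + 1) hm
      have hs : 1 ≤ Nat.sqrt (k + 1) := Nat.sqrt_pos.2 (Nat.succ_pos k)
      have hle : k + 1 - Nat.sqrt (k + 1) ≤ k := by omega
      have h3 : ω (k + 1) < 2 * ω (k + 1 - Nat.sqrt (k + 1)) := by
        rw [div_lt_iff₀ (hpos _)] at h2
        linarith
      have h4 : ω (k + 1 - Nat.sqrt (k + 1)) ≤ ω k := hmono hle
      have h5 : ω (k + 1) ≤ 2 * ω k := by linarith
      have hnn : (0:ℝ) ≤ ∑ k ∈ range M, ω (k + 1) / ω k :=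
        Finset.sum_nonneg fun j _ => div_nonneg (hpos _).le (hpos _).le
      nlinarith [(hpos k).le]
  · refine ⟨1, le_refl _, fun k => ?_⟩
    rw [one_mul]
    exact hanti (Nat.le_succ k)

lemma shift_le (hpos : ∀ k, 0 < ω k) {K : ℝ} (hK1 : 1 ≤ K)
    (hK : ∀ k, ω (k + 1) ≤ K * ω k) (g : Polynomial ℂ) :
    wNormSq ω (Polynomial.X * g) ≤ K * wNormSq ω g := by
  obtain ⟨M, h1, h2⟩ : ∃ M, (Polynomial.X * g).natDegree < M + 1 ∧ g.natDegree < M :=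
    ⟨g.natDegree + (Polynomial.X * g).natDegree + 1, by omega, by omega⟩
  rw [wNormSq_eq_sum ω _ h1, wNormSq_eq_sum ω g h2]
  have hz : (Polynomial.X * g).coeff 0 = 0 := by
    rw [Polynomial.mul_coeff_zero, Polynomial.coeff_X_zero, zero_mul]
  have hXc : ∀ k, (Polynomial.X * g).coeff (k + 1) = g.coeff k := fun k => Polynomial.coeff_X_mul g k
  have hsplit : ∑ k ∈ range (M + 1), ω k * ‖(Polynomial.X * g).coeff k‖ ^ 2
      = (∑ k ∈ range M, ω (k + 1) * ‖(Polynomial.X * g).coeff (k + 1)‖ ^ 2)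
          + ω 0 * ‖(Polynomial.X * g).coeff 0‖ ^ 2 := by
    rw [Finset.sum_range_succ']
  have e2 : (∑ k ∈ range M, ω (k + 1) * ‖(Polynomial.X * g).coeff (k + 1)‖ ^ 2)
          + ω 0 * ‖(Polynomial.X * g).coeff 0‖ ^ 2
      = ∑ k ∈ range M, ω (k + 1) * ‖g.coeff k‖ ^ 2 := by
    simp only [hXc, hz]; simp
  have e3 : ∑ k ∈ range M, ω (k + 1) * ‖g.coeff k‖ ^ 2
      ≤ ∑ k ∈ range M, K * (ω k * ‖g.coeff k‖ ^ 2) := by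
    apply Finset.sum_le_sum
    intro k _
    have := hK k
    nlinarith [norm_nonneg (g.coeff k), sq_nonneg (‖g.coeff k‖)]
  have e4 : ∑ k ∈ range M, K * (ω k * ‖g.coeff k‖ ^ 2)
      = K * ∑ k ∈ range M, ω k * ‖g.coeff k‖ ^ 2 := by rw [Finset.mul_sum]
  rw [hsplit, e2, ← e4]
  exact e3

lemma wNormSq_C_mul (hpos : ∀ k, 0 < ω k) (c : ℂ) (g : Polynomial ℂ) :
    wNormSq ω (Polynomial.C c * g) = ‖c‖ ^ 2 * wNormSq ω g := by
  set N := (Polynomial.C c * g).natDegree + g.natDegree + 1 with hN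
  have h1 : (Polynomial.C c * g).natDegree < N := by omega
  have h2 : g.natDegree < N := by omega
  rw [wNormSq_eq_norm ω hpos _ h1, wNormSq_eq_norm ω hpos _ h2, vec_smul, norm_smul]
  rw [mul_pow]

lemma pow_shift_le (hpos : ∀ k, 0 < ω k) {K : ℝ} (hK1 : 1 ≤ K)
    (hK : ∀ k, ω (k + 1) ≤ K * ω k) (j : ℕ) (g : Polynomial ℂ) :
    wNormSq ω (Polynomial.X ^ j * g) ≤ K ^ j * wNormSq ω g := by
  induction j with
  | zero => simp
  | succ j ih =>
    have : Polynomial.X ^ (j + 1) * g = Polynomial.X * (Polynomial.X ^ j * g) := by ring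
    rw [this]
    calc wNormSq ω (Polynomial.X * (Polynomial.X ^ j * g))
        ≤ K * wNormSq ω (Polynomial.X ^ j * g) := shift_le ω hpos hK1 hK _
      _ ≤ K * (K ^ j * wNormSq ω g) := by
          apply mul_le_mul_of_nonneg_left ih (by linarith)
      _ = K ^ (j + 1) * wNormSq ω g := by ring

lemma nrm_sum_le (hpos : ∀ k, 0 < ω k) {ι : Type*} (s : Finset ι) (f : ι → Polynomial ℂ) :
    Real.sqrt (wNormSq ω (∑ i ∈ s, f i)) ≤ ∑ i ∈ s, Real.sqrt (wNormSq ω (f i)) := by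
  classical
  induction s using Finset.induction_on with
  | empty => simp [wNormSq_zero]
  | insert _ _ hx ih =>
    rename_i a t
    rw [Finset.sum_insert hx, Finset.sum_insert hx]
    calc Real.sqrt (wNormSq ω (f a + ∑ i ∈ t, f i))
        ≤ Real.sqrt (wNormSq ω (f a)) + Real.sqrt (wNormSq ω (∑ i ∈ t, f i)) :=
          nrm_add_le ω hpos _ _
      _ ≤ _ := by linarith

lemma mul_bound (hpos : ∀ k, 0 < ω k) (hmono : Monotone ω ∨ Antitone ω)
    (hreg : Tendsto (fun n => ω n / ω (n - Nat.sqrt n)) atTop (nhds 1)) (h : Polynomial ℂ) :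
    ∃ C : ℝ, 0 < C ∧ ∀ g, wNormSq ω (h * g) ≤ C * wNormSq ω g := by
  obtain ⟨K, hK1, hK⟩ := ratio_bound ω hmono hpos hreg
  set B := ∑ j ∈ range (h.natDegree + 1), ‖h.coeff j‖ * Real.sqrt (K ^ j) with hB
  have hBnn : 0 ≤ B := Finset.sum_nonneg fun j _ => by positivity
  refine ⟨B ^ 2 + 1, by positivity, fun g => ?_⟩
  have hrepr : h = ∑ j ∈ range (h.natDegree + 1), Polynomial.monomial j (h.coeff j) :=
    Polynomial.as_sum_range' h _ (Nat.lt_succ_self _)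
  have hmul : h * g = ∑ j ∈ range (h.natDegree + 1), Polynomial.monomial j (h.coeff j) * g := by
    conv_lhs => rw [hrepr]
    rw [Finset.sum_mul]
  have step : ∀ j, Real.sqrt (wNormSq ω (Polynomial.monomial j (h.coeff j) * g))
      ≤ ‖h.coeff j‖ * Real.sqrt (K ^ j) * Real.sqrt (wNormSq ω g) := by
    intro j
    have : Polynomial.monomial j (h.coeff j) * g = Polynomial.C (h.coeff j) * (Polynomial.X ^ j * g) := by
      rw [← Polynomial.C_mul_X_pow_eq_monomial]; ring
    rw [this, wNormSq_C_mul ω hpos]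
    rw [Real.sqrt_mul (by positivity), Real.sqrt_sq (norm_nonneg _)]
    rw [mul_assoc]
    apply mul_le_mul_of_nonneg_left _ (norm_nonneg _)
    calc Real.sqrt (wNormSq ω (Polynomial.X ^ j * g))
        ≤ Real.sqrt (K ^ j * wNormSq ω g) := Real.sqrt_le_sqrt (pow_shift_le ω hpos hK1 hK j g)
      _ = Real.sqrt (K ^ j) * Real.sqrt (wNormSq ω g) := Real.sqrt_mul (by positivity) _
  have htri : Real.sqrt (wNormSq ω (h * g)) ≤ B * Real.sqrt (wNormSq ω g) := by
    rw [hmul]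
    calc Real.sqrt (wNormSq ω (∑ j ∈ range (h.natDegree + 1), Polynomial.monomial j (h.coeff j) * g))
        ≤ ∑ j ∈ range (h.natDegree + 1), Real.sqrt (wNormSq ω (Polynomial.monomial j (h.coeff j) * g)) :=
          nrm_sum_le ω hpos _ _
      _ ≤ ∑ j ∈ range (h.natDegree + 1), ‖h.coeff j‖ * Real.sqrt (K ^ j) * Real.sqrt (wNormSq ω g) :=
          Finset.sum_le_sum fun j _ => step j
      _ = B * Real.sqrt (wNormSq ω g) := by rw [hB, Finset.sum_mul]
  have h1 : wNormSq ω (h * g) = Real.sqrt (wNormSq ω (h * g)) ^ 2 :=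
    (Real.sq_sqrt (wNormSq_nonneg ω hpos _)).symm
  have h2 : wNormSq ω g = Real.sqrt (wNormSq ω g) ^ 2 :=
    (Real.sq_sqrt (wNormSq_nonneg ω hpos _)).symm
  rw [h1, h2]
  have hs := Real.sqrt_nonneg (wNormSq ω (h * g))
  have hs2 := Real.sqrt_nonneg (wNormSq ω g)
  nlinarith

lemma wNormSq_X_pow (hpos : ∀ k, 0 < ω k) (j : ℕ) :
    wNormSq ω (Polynomial.X ^ j : Polynomial ℂ) = ω j := by
  have h : (Polynomial.X ^ j : Polynomial ℂ).natDegree < j + 1 := by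
    rw [Polynomial.natDegree_X_pow]; omega
  rw [wNormSq_eq_sum ω _ h]
  have : ∀ k, ω k * ‖(Polynomial.X ^ j : Polynomial ℂ).coeff k‖ ^ 2
      = if k = j then ω k else 0 := by
    intro k
    rw [Polynomial.coeff_X_pow]
    by_cases hk : k = j <;> simp [hk]
  rw [Finset.sum_congr rfl (fun k _ => this k), Finset.sum_ite_eq' (range (j + 1)) j (fun k => ω k)]
  simp

lemma single_factor_circle (hpos : ∀ k, 0 < ω k) (hdiv : ¬ Summable (fun k => 1 / ω k))
    (b : ℂ) (hb : ‖b‖ = 1) {ε : ℝ} (hε : 0 < ε) :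
    ∃ w : Polynomial ℂ, wNormSq ω (1 - w * (Polynomial.X - Polynomial.C b)) < ε := by
  obtain ⟨M, hM⟩ := ((S_tendsto ω hpos hdiv).eventually_gt_atTop (1 / ε)).exists
  have hS : 0 < S ω M := S_pos ω hpos M
  have hSne : (S ω M : ℂ) ≠ 0 := by exact_mod_cast hS.ne'
  set c : ℕ → ℂ := fun k => (starRingEnd ℂ b) ^ k / ((ω k : ℂ) * (S ω M : ℂ)) with hc
  set g : Polynomial ℂ := ∑ k ∈ range (M + 1), Polynomial.monomial k (c k) with hg
  have hgco : ∀ j, g.coeff j = if j ∈ range (M + 1) then c j else 0 := by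
    intro j
    rw [hg, Polynomial.finset_sum_coeff]
    rw [Finset.sum_congr rfl (fun k _ => Polynomial.coeff_monomial)]
    exact Finset.sum_ite_eq' (range (M + 1)) j c
  have hcb : (starRingEnd ℂ) b * b = 1 := by
    rw [mul_comm, Complex.mul_conj]
    rw [← Complex.sq_norm, hb]
    norm_num
  have heval : g.eval b = 1 := by
    rw [hg, Polynomial.eval_finset_sum]
    have : ∀ k, (Polynomial.monomial k (c k)).eval b = (1 : ℂ) / ((ω k : ℂ) * (S ω M : ℂ)) := by
      intro k
      rw [Polynomial.eval_monomial, hc]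
      have : (starRingEnd ℂ b) ^ k / ((ω k : ℂ) * (S ω M : ℂ)) * b ^ k
          = ((starRingEnd ℂ b) * b) ^ k / ((ω k : ℂ) * (S ω M : ℂ)) := by
        rw [mul_pow]; ring
      rw [this, hcb, one_pow]
    rw [Finset.sum_congr rfl (fun k _ => this k)]
    have : ∑ k ∈ range (M + 1), (1 : ℂ) / ((ω k : ℂ) * (S ω M : ℂ))
        = (∑ k ∈ range (M + 1), (1 : ℂ) / (ω k : ℂ)) / (S ω M : ℂ) := by
      rw [Finset.sum_div]
      apply Finset.sum_congr rfl
      intro k _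
      rw [div_div]
    rw [this]
    have : (∑ k ∈ range (M + 1), (1 : ℂ) / (ω k : ℂ)) = ((S ω M : ℝ) : ℂ) := by
      rw [S]
      push_cast
      rfl
    rw [this, div_self hSne]
  have hroot : Polynomial.IsRoot (1 - g) b := by
    simp [Polynomial.IsRoot, heval]
  obtain ⟨w, hw⟩ := Polynomial.dvd_iff_isRoot.2 hroot
  refine ⟨w, ?_⟩
  have hgeq : (1 : Polynomial ℂ) - w * (Polynomial.X - Polynomial.C b) = g := by
    have : w * (Polynomial.X - Polynomial.C b) = 1 - g := by rw [mul_comm]; exact hw.symm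
    rw [this]; ring
  rw [hgeq]
  have hdeg : g.natDegree < M + 1 := by
    have : g.natDegree ≤ M := by
      rw [hg]
      apply Polynomial.natDegree_sum_le_of_forall_le
      intro k hk
      exact le_trans (Polynomial.natDegree_monomial_le _) (Nat.lt_succ_iff.1 (Finset.mem_range.1 hk))
    omega
  rw [wNormSq_eq_sum ω g hdeg]
  have hterm : ∀ k ∈ range (M + 1), ω k * ‖g.coeff k‖ ^ 2
      = (1 / ω k) * (1 / (S ω M) ^ 2) := by
    intro k hk
    rw [hgco k, if_pos hk, hc]
    have : ‖(starRingEnd ℂ b) ^ k / ((ω k : ℂ) * (S ω M : ℂ))‖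
        = 1 / (ω k * S ω M) := by
      rw [norm_div, norm_pow, Complex.norm_conj, hb, one_pow, norm_mul, Complex.norm_real,
        Complex.norm_real, Real.norm_of_nonneg (hpos k).le, Real.norm_of_nonneg hS.le]
    rw [this]
    have hωk := hpos k
    field_simp
  rw [Finset.sum_congr rfl hterm, ← Finset.sum_mul]
  have : (∑ k ∈ range (M + 1), 1 / ω k) = S ω M := rfl
  rw [this]
  have hfin : S ω M * (1 / S ω M ^ 2) = 1 / S ω M := by
    field_simp
  rw [hfin]
  rw [div_lt_iff₀ hS, ← div_lt_iff₀' hε]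
  exact hM

lemma single_factor_outside (hpos : ∀ k, 0 < ω k) (hdiv : ¬ Summable (fun k => 1 / ω k))
    (b : ℂ) (hb : 1 < ‖b‖) {ε : ℝ} (hε : 0 < ε) :
    ∃ w : Polynomial ℂ, wNormSq ω (1 - w * (Polynomial.X - Polynomial.C b)) < ε := by
  set r := ‖b‖ with hr
  have hr0 : 0 < r := lt_trans one_pos hb
  have hinv : (0:ℝ) ≤ 1 / r := by positivity
  have hinv1 : 1 / r < 1 := by rw [div_lt_one hr0]; exact hb
  have hev : ∀ᶠ m in atTop, (1 / r) ^ m < ε :=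
    (tendsto_pow_atTop_nhds_zero_of_lt_one hinv hinv1).eventually_lt_const hε
  obtain ⟨m₀, hm₀⟩ := Filter.eventually_atTop.1 hev
  have hex : ∃ m, m₀ ≤ m ∧ ω (m + 1) ≤ r ^ (m + 1) := by
    by_contra hcon
    push_neg at hcon
    apply hdiv
    rw [← summable_nat_add_iff (m₀ + 1)]
    have hsum : Summable (fun n : ℕ => (1 / r) ^ (n + (m₀ + 1))) := by
      have : (fun n : ℕ => (1 / r) ^ (n + (m₀ + 1))) = fun n : ℕ => (1 / r) ^ (m₀ + 1) * (1 / r) ^ n := by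
        funext n
        rw [pow_add]
        ring
      rw [this]
      exact (summable_geometric_of_lt_one hinv hinv1).mul_left _
    apply Summable.of_nonneg_of_le (fun n => (div_pos one_pos (hpos _)).le) (fun n => ?_) hsum
    have hbig := hcon (n + m₀) (Nat.le_add_left _ _)
    have hpow : (0:ℝ) < r ^ (n + m₀ + 1) := pow_pos hr0 _
    have : 1 / ω (n + m₀ + 1) ≤ 1 / r ^ (n + m₀ + 1) :=
      one_div_le_one_div_of_le hpow hbig.le
    have heq : n + (m₀ + 1) = n + m₀ + 1 := by omega
    rw [heq, one_div_pow]
    exact this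
  obtain ⟨m, hm, hωm⟩ := hex
  have hbne : b ≠ 0 := by
    intro h
    rw [h, norm_zero] at hr
    rw [hr] at hb
    norm_num at hb
  set g : Polynomial ℂ := Polynomial.C (1 / b ^ (m + 1)) * Polynomial.X ^ (m + 1) with hg
  have heval : g.eval b = 1 := by
    rw [hg, Polynomial.eval_mul, Polynomial.eval_C, Polynomial.eval_pow, Polynomial.eval_X]
    rw [one_div, inv_mul_cancel₀ (pow_ne_zero _ hbne)]
  have hroot : Polynomial.IsRoot (1 - g) b := by
    simp [Polynomial.IsRoot, heval]
  obtain ⟨w, hw⟩ := Polynomial.dvd_iff_isRoot.2 hroot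
  refine ⟨w, ?_⟩
  have hgeq : (1 : Polynomial ℂ) - w * (Polynomial.X - Polynomial.C b) = g := by
    have : w * (Polynomial.X - Polynomial.C b) = 1 - g := by rw [mul_comm]; exact hw.symm
    rw [this]; ring
  rw [hgeq, hg, wNormSq_C_mul ω hpos, wNormSq_X_pow ω hpos]
  have habs : ‖1 / b ^ (m + 1)‖ = 1 / r ^ (m + 1) := by
    rw [norm_div, norm_one, norm_pow]
  rw [habs]
  set t := r ^ (m + 1) with ht
  have ht0 : 0 < t := pow_pos hr0 _
  have h1 : (1 / t) ^ 2 * ω (m + 1) ≤ (1 / t) ^ 2 * t :=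
    mul_le_mul_of_nonneg_left hωm (by positivity)
  have h2 : (1 / t) ^ 2 * t = 1 / t := by
    field_simp
  have h3 : (1 / r) ^ (m + 1) = 1 / t := by rw [one_div_pow]
  have h4 : (1 / r) ^ (m + 1) < ε := hm₀ (m + 1) (by omega)
  calc (1 / t) ^ 2 * ω (m + 1) ≤ (1 / t) ^ 2 * t := h1
    _ = 1 / t := h2
    _ = (1 / r) ^ (m + 1) := h3.symm
    _ < ε := h4

lemma single_factor (hpos : ∀ k, 0 < ω k) (hdiv : ¬ Summable (fun k => 1 / ω k))
    (b : ℂ) (hb : 1 ≤ ‖b‖) {ε : ℝ} (hε : 0 < ε) :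
    ∃ w : Polynomial ℂ, wNormSq ω (1 - w * (Polynomial.X - Polynomial.C b)) < ε := by
  rcases eq_or_lt_of_le hb with h | h
  · exact single_factor_circle ω hpos hdiv b h.symm hε
  · exact single_factor_outside ω hpos hdiv b h hε

lemma cyclic_prod (hpos : ∀ k, 0 < ω k) (hmono : Monotone ω ∨ Antitone ω)
    (hreg : Tendsto (fun n => ω n / ω (n - Nat.sqrt n)) atTop (nhds 1))
    (hdiv : ¬ Summable (fun k => 1 / ω k)) :
    ∀ (s : Multiset ℂ), (∀ b ∈ s, 1 ≤ ‖b‖) → ∀ ε > 0,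
      ∃ q : Polynomial ℂ,
        wNormSq ω (1 - q * (Multiset.map (fun a => Polynomial.X - Polynomial.C a) s).prod) < ε := by
  intro s
  induction s using Multiset.induction_on with
  | empty =>
    intro _ ε hε
    refine ⟨1, ?_⟩
    simp [wNormSq_zero, hε]
  | cons a s IH =>
    intro hs ε hε
    have ha : 1 ≤ ‖a‖ := hs a (Multiset.mem_cons_self a s)
    have hs' : ∀ b ∈ s, 1 ≤ ‖b‖ := fun b hb => hs b (Multiset.mem_cons_of_mem hb)
    obtain ⟨w, hw⟩ := single_factor ω hpos hdiv a ha (show (0:ℝ) < ε / 4 by linarith)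
    obtain ⟨Cm, hCm0, hCm⟩ := mul_bound ω hpos hmono hreg (w * (Polynomial.X - Polynomial.C a))
    obtain ⟨q', hq'⟩ := IH hs' (ε / (4 * Cm)) (by positivity)
    refine ⟨w * q', ?_⟩
    set F := (Multiset.map (fun a => Polynomial.X - Polynomial.C a) s).prod with hF
    have hmap : (Multiset.map (fun a => Polynomial.X - Polynomial.C a) (a ::ₘ s)).prod
        = (Polynomial.X - Polynomial.C a) * F := by
      rw [Multiset.map_cons, Multiset.prod_cons]
    rw [hmap]
    have halg : (1 : Polynomial ℂ) - (w * q') * ((Polynomial.X - Polynomial.C a) * F)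
        = (1 - w * (Polynomial.X - Polynomial.C a))
          + (w * (Polynomial.X - Polynomial.C a)) * (1 - q' * F) := by ring
    rw [halg]
    have hsec : wNormSq ω ((w * (Polynomial.X - Polynomial.C a)) * (1 - q' * F)) < Cm * (ε / (4 * Cm)) :=
      lt_of_le_of_lt (hCm _) (by
        apply mul_lt_mul_of_pos_left hq' hCm0)
    have hsec' : wNormSq ω ((w * (Polynomial.X - Polynomial.C a)) * (1 - q' * F)) < ε / 4 := by
      have : Cm * (ε / (4 * Cm)) = ε / 4 := by field_simp
      rwa [this] at hsec
    set A := wNormSq ω ((1 - w * (Polynomial.X - Polynomial.C a))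
        + (w * (Polynomial.X - Polynomial.C a)) * (1 - q' * F)) with hA
    have htri := nrm_add_le ω hpos (1 - w * (Polynomial.X - Polynomial.C a))
        ((w * (Polynomial.X - Polynomial.C a)) * (1 - q' * F))
    have hs1 : Real.sqrt (wNormSq ω (1 - w * (Polynomial.X - Polynomial.C a))) < Real.sqrt (ε / 4) :=
      Real.sqrt_lt_sqrt (wNormSq_nonneg ω hpos _) hw
    have hs2 : Real.sqrt (wNormSq ω ((w * (Polynomial.X - Polynomial.C a)) * (1 - q' * F)))
        < Real.sqrt (ε / 4) :=
      Real.sqrt_lt_sqrt (wNormSq_nonneg ω hpos _) hsec'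
    have hAs : Real.sqrt A < 2 * Real.sqrt (ε / 4) := by
      calc Real.sqrt A ≤ _ := htri
        _ < 2 * Real.sqrt (ε / 4) := by linarith
    have hA0 : 0 ≤ A := wNormSq_nonneg ω hpos _
    have hsq : A = Real.sqrt A ^ 2 := (Real.sq_sqrt hA0).symm
    have hε4 : Real.sqrt (ε / 4) ^ 2 = ε / 4 := Real.sq_sqrt (by linarith)
    nlinarith [Real.sqrt_nonneg A, Real.sqrt_nonneg (ε / 4)]

lemma min_inner_zero {N : ℕ} (x y : EuclideanSpace ℂ (Fin N))
    (h : ∀ t : ℂ, ‖x‖ ≤ ‖x - t • y‖) : inner ℂ y x = 0 := by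
  by_cases hy : y = 0
  · rw [hy, inner_zero_left]
  · have hy0 : 0 < ‖y‖ := norm_pos_iff.2 hy
    set c : ℂ := inner ℂ y x with hc
    set t : ℂ := c / ((‖y‖ ^ 2 : ℝ) : ℂ) with htdef
    have hxy : inner ℂ x y = (starRingEnd ℂ) c := (inner_conj_symm x y).symm
    have hexp : ‖x - t • y‖ ^ 2 = ‖x‖ ^ 2 - 2 * RCLike.re (inner ℂ x (t • y)) + ‖t • y‖ ^ 2 :=
      norm_sub_sq x (t • y)
    have h1 : inner ℂ x (t • y) = t * (starRingEnd ℂ) c := by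
      rw [inner_smul_right, hxy]
    have hcc : c * (starRingEnd ℂ) c = ((‖c‖ ^ 2 : ℝ) : ℂ) := by
      rw [Complex.mul_conj, Complex.normSq_eq_norm_sq]
    have h2 : t * (starRingEnd ℂ) c = ((‖c‖ ^ 2 / ‖y‖ ^ 2 : ℝ) : ℂ) := by
      rw [htdef, div_mul_eq_mul_div, hcc]
      push_cast
      ring
    have h3 : RCLike.re (inner ℂ x (t • y)) = ‖c‖ ^ 2 / ‖y‖ ^ 2 := by
      rw [h1, h2]
      exact Complex.ofReal_re _
    have h4 : ‖t • y‖ ^ 2 = ‖c‖ ^ 2 / ‖y‖ ^ 2 := by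
      rw [norm_smul, mul_pow, htdef]
      rw [norm_div]
      have hny : ‖(((‖y‖ : ℝ) ^ 2 : ℝ) : ℂ)‖ = ‖y‖ ^ 2 := by
        rw [Complex.norm_real, Real.norm_eq_abs]
        exact abs_of_nonneg (sq_nonneg _)
      rw [hny]
      field_simp
    have h5 := h t
    have h6 : ‖x‖ ^ 2 ≤ ‖x - t • y‖ ^ 2 := by
      apply pow_le_pow_left₀ (norm_nonneg _) h5
    rw [hexp, h3, h4] at h6
    have h7 : ‖c‖ ^ 2 / ‖y‖ ^ 2 ≤ 0 := by linarith
    have h8 : ‖c‖ ^ 2 ≤ 0 := by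
      by_contra hcon
      push_neg at hcon
      have : 0 < ‖c‖ ^ 2 / ‖y‖ ^ 2 := div_pos hcon (by positivity)
      linarith
    have : ‖c‖ = 0 := by nlinarith [norm_nonneg c]
    exact norm_eq_zero.1 this

def kvec (b : ℂ) (N : ℕ) : EuclideanSpace ℂ (Fin N) :=
  WithLp.toLp 2 fun k => (starRingEnd ℂ b) ^ (k : ℕ) / ((Real.sqrt (ω k) : ℝ) : ℂ)

lemma inner_kvec (hpos : ∀ k, 0 < ω k) (b : ℂ) (N : ℕ) (g : Polynomial ℂ)
    (hdN : g.natDegree < N) : inner ℂ (kvec ω b N) (vec ω N g) = g.eval b := by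
  have hsne : ∀ k : ℕ, ((Real.sqrt (ω k) : ℝ) : ℂ) ≠ 0 := by
    intro k
    simp only [ne_eq, Complex.ofReal_eq_zero]
    exact Real.sqrt_ne_zero'.2 (hpos k)
  rw [PiLp.inner_apply]
  have hterm : ∀ i : Fin N, inner ℂ (kvec ω b N i) (vec ω N g i)
      = (fun k => g.coeff k * b ^ k) (i : ℕ) := by
    intro i
    rw [RCLike.inner_apply']
    show (starRingEnd ℂ) ((starRingEnd ℂ b) ^ (i : ℕ) / ((Real.sqrt (ω i) : ℝ) : ℂ)) *
      ((Real.sqrt (ω i) : ℂ) * g.coeff i) = _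
    rw [map_div₀, map_pow, Complex.conj_conj, Complex.conj_ofReal]
    field_simp [hsne (i : ℕ)]
  rw [Finset.sum_congr rfl (fun i _ => hterm i)]
  rw [Fin.sum_univ_eq_sum_range (fun k => g.coeff k * b ^ k) N]
  exact (Polynomial.eval_eq_sum_range' hdN b).symm

lemma norm_kvec (hpos : ∀ k, 0 < ω k) {b : ℂ} (hb : ‖b‖ = 1) (M : ℕ) :
    ‖kvec ω b (M + 1)‖ ^ 2 = S ω M := by
  rw [EuclideanSpace.norm_eq, Real.sq_sqrt (Finset.sum_nonneg fun i _ => sq_nonneg _)]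
  have hterm : ∀ i : Fin (M + 1), ‖kvec ω b (M + 1) i‖ ^ 2 = (fun k => 1 / ω k) (i : ℕ) := by
    intro i
    show ‖(starRingEnd ℂ b) ^ (i : ℕ) / ((Real.sqrt (ω i) : ℝ) : ℂ)‖ ^ 2 = _
    rw [norm_div, norm_pow, Complex.norm_conj, hb, one_pow,
      Complex.norm_real, Real.norm_of_nonneg (Real.sqrt_nonneg _)]
    rw [div_pow, one_pow, Real.sq_sqrt (hpos _).le]
  rw [Finset.sum_congr rfl (fun i _ => hterm i)]
  rw [Fin.sum_univ_eq_sum_range (fun k => 1 / ω k) (M + 1)]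
  rfl

/-- Cauchy–Schwarz lower bound via a root on the circle. -/
lemma lb_of_circle_root (hpos : ∀ k, 0 < ω k) {g : Polynomial ℂ} {b : ℂ}
    (hb : ‖b‖ = 1) (heval : g.eval b = 1) {M : ℕ} (hdeg : g.natDegree ≤ M) :
    1 ≤ wNormSq ω g * S ω M := by
  have hdN : g.natDegree < M + 1 := by omega
  have hcs := norm_inner_le_norm (𝕜 := ℂ) (kvec ω b (M + 1)) (vec ω (M + 1) g)
  rw [inner_kvec ω hpos b (M + 1) g hdN, heval] at hcs
  have h1 : (1:ℝ) ≤ ‖kvec ω b (M + 1)‖ * ‖vec ω (M + 1) g‖ := by simpa using hcs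
  have hx2 : ‖vec ω (M + 1) g‖ ^ 2 = wNormSq ω g := (wNormSq_eq_norm ω hpos g hdN).symm
  have hv2 := norm_kvec ω hpos hb M
  nlinarith [norm_nonneg (kvec ω b (M + 1)), norm_nonneg (vec ω (M + 1) g)]

lemma err_natDegree_le {f q : Polynomial ℂ} {d m : ℕ} (hf : f.natDegree = d)
    (hq : q.natDegree ≤ m) : ((1 : Polynomial ℂ) - q * f).natDegree ≤ m + d := by
  apply le_trans (Polynomial.natDegree_sub_le _ _)
  apply max_le
  · simp [Polynomial.natDegree_one]
  · exact le_trans Polynomial.natDegree_mul_le (by omega)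

lemma coeff_top {f : Polynomial ℂ} {d : ℕ} (hd : 1 ≤ d) (hmonic : f.Monic)
    (hf : f.natDegree = d) {q : Polynomial ℂ} {m : ℕ} (hq : q.natDegree ≤ m) :
    ((1 : Polynomial ℂ) - q * f).coeff (m + d) = - q.coeff m := by
  rw [Polynomial.coeff_sub, Polynomial.coeff_one]
  have h0 : (if (m + d : ℕ) = 0 then (1:ℂ) else 0) = 0 := by
    rw [if_neg]
    omega
  rw [h0, Polynomial.coeff_mul]
  rw [Finset.sum_eq_single_of_mem (m, d) (Finset.HasAntidiagonal.mem_antidiagonal.2 rfl)]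
  · rw [← hf, hmonic.coeff_natDegree, mul_one]
    ring
  · intro x hx hne
    have hxs := Finset.HasAntidiagonal.mem_antidiagonal.1 hx
    by_cases h1 : x.1 ≤ m
    · rcases lt_or_eq_of_le h1 with h1' | h1'
      · have h2 : d < x.2 := by omega
        rw [Polynomial.coeff_eq_zero_of_natDegree_lt (by omega : f.natDegree < x.2), mul_zero]
      · exfalso
        apply hne
        have h2 : x.2 = d := by omega
        exact Prod.ext h1' h2
    · push_neg at h1
      rw [Polynomial.coeff_eq_zero_of_natDegree_lt (by omega : q.natDegree < x.1), zero_mul]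

lemma step_ineq (hpos : ∀ k, 0 < ω k) {f : Polynomial ℂ} {d : ℕ} (hd : 1 ≤ d)
    (hmonic : f.Monic) (hdeg : f.natDegree = d) {p : ℕ → Polynomial ℂ}
    (hp : ∀ n, IsOPA ω f n (p n)) (n : ℕ) :
    wNormSq ω (1 - p n * f) ≤ wNormSq ω (1 - p (n + 1) * f)
      + ‖((1 : Polynomial ℂ) - p (n + 1) * f).coeff (n + 1 + d)‖ ^ 2
        * wNormSq ω (Polynomial.X ^ (n + 1) * f) := by
  set g : Polynomial ℂ := 1 - p (n + 1) * f with hg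
  set t₀ : ℂ := (p (n + 1)).coeff (n + 1) with ht₀
  set y : Polynomial ℂ := Polynomial.X ^ (n + 1) * f with hy
  have hpdeg : (p (n + 1)).natDegree ≤ n + 1 :=
    Polynomial.natDegree_le_iff_degree_le.2 (hp (n + 1)).1
  have hga : g.coeff (n + 1 + d) = - t₀ := coeff_top hd hmonic hdeg hpdeg
  have habs : ‖g.coeff (n + 1 + d)‖ = ‖t₀‖ := by
    rw [hga]
    exact norm_neg t₀
  have hgdeg : g.natDegree ≤ n + 1 + d := err_natDegree_le hdeg hpdeg
  have hydeg : y.natDegree ≤ n + 1 + d := by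
    rw [hy]
    apply le_trans Polynomial.natDegree_mul_le
    rw [Polynomial.natDegree_X_pow, hdeg]
  set N := n + 1 + d + 1 with hN
  have hgN : g.natDegree < N := by omega
  have hyN : y.natDegree < N := by omega
  have hmin : ∀ t : ℂ, ‖vec ω N g‖ ≤ ‖vec ω N g - t • vec ω N y‖ := by
    intro t
    set qt : Polynomial ℂ := p (n + 1) + Polynomial.C t * Polynomial.X ^ (n + 1) with hqt
    have hqtdeg : qt.degree ≤ ((n + 1 : ℕ) : WithBot ℕ) := by
      apply le_trans (Polynomial.degree_add_le _ _)
      apply max_le (hp (n + 1)).1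
      apply le_trans Polynomial.degree_le_natDegree
      have : (Polynomial.C t * Polynomial.X ^ (n + 1) : Polynomial ℂ).natDegree ≤ n + 1 := by
        apply le_trans (Polynomial.natDegree_C_mul_le _ _)
        rw [Polynomial.natDegree_X_pow]
      exact_mod_cast this
    have hopt := (hp (n + 1)).2 qt hqtdeg
    have halg : (1 : Polynomial ℂ) - qt * f = g - Polynomial.C t * y := by
      rw [hqt, hg, hy]
      ring
    have hddeg : (g - Polynomial.C t * y).natDegree < N := by
      apply Nat.lt_succ_of_le
      apply le_trans (Polynomial.natDegree_sub_le _ _)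
      exact max_le hgdeg (le_trans (Polynomial.natDegree_C_mul_le _ _) hydeg)
    have hvec : vec ω N (g - Polynomial.C t * y) = vec ω N g - t • vec ω N y := by
      rw [vec_sub, vec_smul]
    have heq1 : wNormSq ω g = ‖vec ω N g‖ ^ 2 := wNormSq_eq_norm ω hpos g hgN
    have heq2 : wNormSq ω (g - Polynomial.C t * y) = ‖vec ω N g - t • vec ω N y‖ ^ 2 := by
      rw [wNormSq_eq_norm ω hpos _ hddeg, hvec]
    rw [halg] at hopt
    rw [heq1, heq2] at hopt
    calc ‖vec ω N g‖ = Real.sqrt (‖vec ω N g‖ ^ 2) := (Real.sqrt_sq (norm_nonneg _)).symm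
      _ ≤ Real.sqrt (‖vec ω N g - t • vec ω N y‖ ^ 2) := Real.sqrt_le_sqrt hopt
      _ = _ := Real.sqrt_sq (norm_nonneg _)
  have horth : inner ℂ (vec ω N y) (vec ω N g) = 0 := min_inner_zero _ _ hmin
  set q0 : Polynomial ℂ := p (n + 1) - Polynomial.C t₀ * Polynomial.X ^ (n + 1) with hq0
  have hq0deg : q0.degree ≤ ((n : ℕ) : WithBot ℕ) := by
    rw [Polynomial.degree_le_iff_coeff_zero]
    intro m' hm'
    have hnm : n < m' := by exact_mod_cast hm'
    rw [hq0, Polynomial.coeff_sub, Polynomial.coeff_C_mul, Polynomial.coeff_X_pow]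
    by_cases hcase : m' = n + 1
    · rw [hcase, if_pos rfl, mul_one, ht₀]
      ring
    · rw [if_neg (fun hh => hcase hh), mul_zero]
      rw [Polynomial.coeff_eq_zero_of_natDegree_lt (by omega : (p (n + 1)).natDegree < m')]
      ring
  have hopt0 := (hp n).2 q0 hq0deg
  have halg0 : (1 : Polynomial ℂ) - q0 * f = g + Polynomial.C t₀ * y := by
    rw [hq0, hg, hy]
    ring
  have hdeg0 : (g + Polynomial.C t₀ * y).natDegree < N := by
    apply Nat.lt_succ_of_le
    apply le_trans (Polynomial.natDegree_add_le _ _)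
    exact max_le hgdeg (le_trans (Polynomial.natDegree_C_mul_le _ _) hydeg)
  have hvec0 : vec ω N (g + Polynomial.C t₀ * y) = vec ω N g + t₀ • vec ω N y := by
    rw [vec_add, vec_smul]
  have hpyth : wNormSq ω (g + Polynomial.C t₀ * y)
      = wNormSq ω g + ‖t₀‖ ^ 2 * wNormSq ω y := by
    rw [wNormSq_eq_norm ω hpos _ hdeg0, hvec0, norm_add_sq (𝕜 := ℂ)]
    have hzero : inner ℂ (vec ω N g) (t₀ • vec ω N y) = 0 := by
      rw [inner_smul_right, ← inner_conj_symm, horth, map_zero, mul_zero]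
    rw [hzero]
    simp only [map_zero, mul_zero, add_zero]
    rw [norm_smul, mul_pow]
    rw [wNormSq_eq_norm ω hpos g hgN, wNormSq_eq_norm ω hpos y hyN]
  rw [halg0] at hopt0
  rw [hpyth] at hopt0
  rw [habs]
  exact hopt0

lemma wNormSq_Xpow_mul (hpos : ∀ k, 0 < ω k) {f : Polynomial ℂ} {d : ℕ}
    (hdeg : f.natDegree = d) (m : ℕ) :
    wNormSq ω (Polynomial.X ^ m * f)
      = ∑ j ∈ range (d + 1), ω (m + j) * ‖f.coeff j‖ ^ 2 := by
  have hnd : (Polynomial.X ^ m * f).natDegree < m + (d + 1) := by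
    have : (Polynomial.X ^ m * f).natDegree ≤ m + d := by
      apply le_trans Polynomial.natDegree_mul_le
      rw [Polynomial.natDegree_X_pow, hdeg]
    omega
  rw [wNormSq_eq_sum ω _ hnd]
  have hsplit : (∑ k ∈ range (m + (d + 1)), ω k * ‖(Polynomial.X ^ m * f).coeff k‖ ^ 2)
      = (∑ k ∈ range m, ω k * ‖(Polynomial.X ^ m * f).coeff k‖ ^ 2)
        + ∑ j ∈ range (d + 1), ω (m + j) * ‖(Polynomial.X ^ m * f).coeff (m + j)‖ ^ 2 :=
    by rw [Finset.sum_range_add]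
  rw [hsplit]
  have hco : ∀ k, (Polynomial.X ^ m * f).coeff k = if m ≤ k then f.coeff (k - m) else 0 := by
    intro k
    rw [mul_comm, Polynomial.coeff_mul_X_pow']
  have h1 : ∑ k ∈ range m, ω k * ‖(Polynomial.X ^ m * f).coeff k‖ ^ 2 = 0 := by
    apply Finset.sum_eq_zero
    intro k hk
    have hk' := Finset.mem_range.1 hk
    rw [hco k, if_neg (by omega : ¬ m ≤ k)]
    simp
  have h2 : ∀ j, (Polynomial.X ^ m * f).coeff (m + j) = f.coeff j := by
    intro j
    rw [hco (m + j), if_pos (by omega)]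
    congr 1
    omega
  rw [h1, zero_add]
  exact Finset.sum_congr rfl (fun j _ => by rw [h2 j])

lemma Xpow_f_bound (hpos : ∀ k, 0 < ω k) (hmono : Monotone ω ∨ Antitone ω)
    (hreg : Tendsto (fun n => ω n / ω (n - Nat.sqrt n)) atTop (nhds 1))
    {f : Polynomial ℂ} {d : ℕ} (hdeg : f.natDegree = d) :
    ∃ Cf : ℝ, 1 ≤ Cf ∧ ∃ m₀ : ℕ, ∀ m, m₀ ≤ m →
      wNormSq ω (Polynomial.X ^ m * f) ≤ Cf * ω (m + d) := by
  have hcw : ∃ m₀ : ℕ, ∀ m, m₀ ≤ m → ∀ j, j ≤ d → ω (m + j) ≤ 2 * ω (m + d) := by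
    rcases hmono with hmono | hanti
    · refine ⟨0, fun m _ j hj => ?_⟩
      have h1 : ω (m + j) ≤ ω (m + d) := hmono (by omega)
      have := hpos (m + d)
      linarith
    · have hev : ∀ᶠ nn in atTop, (1:ℝ)/2 < ω nn / ω (nn - Nat.sqrt nn) :=
        hreg.eventually_const_lt (by norm_num)
      obtain ⟨M, hM⟩ := eventually_atTop.1 hev
      refine ⟨M + d * d, fun m hm j hj => ?_⟩
      have hMn : M ≤ m + d := by omega
      have hsq : d ≤ Nat.sqrt (m + d) := by
        calc d = Nat.sqrt (d * d) := (Nat.sqrt_eq d).symm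
          _ ≤ Nat.sqrt (m + d) := Nat.sqrt_le_sqrt (by omega)
      have hle : m + d - Nat.sqrt (m + d) ≤ m + j := by omega
      have h1 : ω (m + j) ≤ ω (m + d - Nat.sqrt (m + d)) := hanti hle
      have h2 := hM (m + d) hMn
      have h3 : ω (m + d - Nat.sqrt (m + d)) < 2 * ω (m + d) := by
        rw [lt_div_iff₀ (hpos _)] at h2
        linarith [h2]
      linarith
  obtain ⟨m₀, hm₀⟩ := hcw
  set A := ∑ j ∈ range (d + 1), ‖f.coeff j‖ ^ 2 with hA
  have hA0 : 0 ≤ A := Finset.sum_nonneg fun j _ => sq_nonneg _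
  refine ⟨2 * A + 1, by linarith, m₀, fun m hm => ?_⟩
  rw [wNormSq_Xpow_mul ω hpos hdeg m]
  calc ∑ j ∈ range (d + 1), ω (m + j) * ‖f.coeff j‖ ^ 2
      ≤ ∑ j ∈ range (d + 1), 2 * ω (m + d) * ‖f.coeff j‖ ^ 2 := by
        apply Finset.sum_le_sum
        intro j hj
        have h1 := hm₀ m hm j (Nat.lt_succ_iff.1 (Finset.mem_range.1 hj))
        exact mul_le_mul_of_nonneg_right h1 (sq_nonneg _)
    _ ≤ (2 * A + 1) * ω (m + d) := by
        have hωp := hpos (m + d)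
        have hsum : ∑ j ∈ range (d + 1), 2 * ω (m + d) * ‖f.coeff j‖ ^ 2
            = 2 * ω (m + d) * A := by
          rw [hA, Finset.mul_sum]
        rw [hsum]
        nlinarith

end OPAx

open OPAx in
/-- Lower bound for the top coefficient of `1 - p_{n_k} f` along a subsequence. -/
theorem top_coefficient_lower_bound
    (ω : ℕ → ℝ) (hω : IsWeight ω) (f : Polynomial ℂ) (d : ℕ) (hd : 1 ≤ d)
    (hmonic : f.Monic) (hdeg : f.natDegree = d)
    (hsimple : f.roots.Nodup)
    (hnodisk : ∀ z ∈ f.roots, 1 ≤ ‖z‖)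
    (hcirc : ∃ z ∈ f.roots, ‖z‖ = 1)
    (p : ℕ → Polynomial ℂ) (hp : ∀ n, IsOPA ω f n (p n)) :
    ∃ δ : ℝ, 0 < δ ∧ ∃ nk : ℕ → ℕ, StrictMono nk ∧
      ∀ k : ℕ, δ / (ω (nk k + d) * S ω (nk k + d)) ≤
        ‖((1 : Polynomial ℂ) - p (nk k) * f).coeff (nk k + d)‖ := by
  obtain ⟨hpos, hmono, hone, hreg, hdiv⟩ := hω
  set D : ℕ → ℝ := fun n => wNormSq ω (1 - p n * f) with hD
  obtain ⟨b, hbroots, hbabs⟩ := hcirc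
  have hbroot : f.eval b = 0 := Polynomial.isRoot_of_mem_roots hbroots
  -- D is antitone
  have hDanti : Antitone D := by
    apply antitone_nat_of_succ_le
    intro n
    exact (hp (n + 1)).2 (p n) (le_trans (hp n).1 (by exact_mod_cast Nat.le_succ n))
  -- lower bound
  have hDlb : ∀ n, 1 ≤ D n * S ω (n + d) := by
    intro n
    apply lb_of_circle_root ω hpos hbabs
    · rw [Polynomial.eval_sub, Polynomial.eval_one, Polynomial.eval_mul, hbroot, mul_zero, sub_zero]
    · exact err_natDegree_le hdeg (Polynomial.natDegree_le_iff_degree_le.2 (hp n).1)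
  obtain ⟨Cf, hCf1, m₀, hCfB⟩ := Xpow_f_bound ω hpos hmono hreg hdeg
  have hstep : ∀ n, m₀ ≤ n + 1 → D n ≤ D (n + 1)
      + Cf * ω (n + 1 + d) * ‖((1 : Polynomial ℂ) - p (n + 1) * f).coeff (n + 1 + d)‖ ^ 2 := by
    intro n hn
    have h1 := step_ineq ω hpos hd hmonic hdeg hp n
    have h2 := hCfB (n + 1) hn
    have h3 := sq_nonneg (‖((1 : Polynomial ℂ) - p (n + 1) * f).coeff (n + 1 + d)‖)
    nlinarith
  have hcyc : ∀ ε > (0:ℝ), ∃ n, D n < ε := by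
    intro ε hε
    have hfactor : f = (Multiset.map (fun a => Polynomial.X - Polynomial.C a) f.roots).prod :=
      (IsAlgClosed.splits f).eq_prod_roots_of_monic hmonic
    obtain ⟨q, hq⟩ := cyclic_prod ω hpos hmono hreg hdiv f.roots hnodisk ε hε
    refine ⟨q.natDegree, ?_⟩
    have hopt := (hp q.natDegree).2 q Polynomial.degree_le_natDegree
    rw [← hfactor] at hq
    exact lt_of_le_of_lt hopt hq
  have hCf0 : (0:ℝ) < Cf := by linarith
  set δ : ℝ := Real.sqrt (1 / (2 * Cf)) with hδdef
  have hδpos : 0 < δ := Real.sqrt_pos.2 (by positivity)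
  have hδ2 : δ ^ 2 = 1 / (2 * Cf) := Real.sq_sqrt (by positivity)
  have hCfδ : Cf * δ ^ 2 = 1 / 2 := by
    rw [hδ2]
    field_simp
  set P : ℕ → Prop := fun m => δ / (ω (m + d) * S ω (m + d)) ≤
      ‖((1 : Polynomial ℂ) - p m * f).coeff (m + d)‖ with hP
  have hfreq : ∀ n₀ : ℕ, ∃ m, n₀ < m ∧ P m := by
    intro n₀
    by_contra hcon
    push_neg at hcon
    set n₁ := max n₀ m₀ with hn₁
    set R : ℕ → ℝ := fun i => 1 / S ω (n₁ + i + d) with hR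
    have hRpos : ∀ i, 0 < R i := fun i => div_pos one_pos (S_pos ω hpos _)
    have hkey : ∀ i, D (n₁ + i) - D (n₁ + i + 1) ≤ Cf * δ ^ 2 * (R i - R (i + 1)) := by
      intro i
      have hm0 : m₀ ≤ n₁ + i + 1 := by omega
      have hst := hstep (n₁ + i) hm0
      have hacon := hcon (n₁ + i + 1) (by omega)
      simp only [hP] at hacon
      push_neg at hacon
      set m := n₁ + i + 1 with hm
      set A := ‖((1 : Polynomial ℂ) - p m * f).coeff (m + d)‖ with hAdef
      have hA0 : 0 ≤ A := norm_nonneg _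
      have hωp := hpos (m + d)
      have hSp := S_pos ω hpos (m + d)
      have hSp' := S_pos ω hpos (n₁ + i + d)
      have hBpos : 0 < δ / (ω (m + d) * S ω (m + d)) := by positivity
      have hA2 : A ^ 2 < (δ / (ω (m + d) * S ω (m + d))) ^ 2 :=
        pow_lt_pow_left₀ hacon hA0 (by norm_num)
      have hmd : m + d = (n₁ + i + d) + 1 := by omega
      have hSsucc : S ω (m + d) = S ω (n₁ + i + d) + 1 / ω (m + d) := by
        rw [hmd, S_succ, ← hmd]
      have hSle : S ω (n₁ + i + d) ≤ S ω (m + d) := by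
        rw [hSsucc]
        have : 0 < 1 / ω (m + d) := by positivity
        linarith
      have hRdiff : R i - R (i + 1) = (1 / ω (m + d)) / (S ω (n₁ + i + d) * S ω (m + d)) := by
        rw [hR]
        show 1 / S ω (n₁ + i + d) - 1 / S ω (n₁ + (i + 1) + d) = _
        have hidx : n₁ + (i + 1) + d = m + d := by omega
        rw [hidx]
        rw [hSsucc]
        field_simp
        ring
      have hRlb : 1 / (ω (m + d) * S ω (m + d) ^ 2) ≤ R i - R (i + 1) := by
        rw [hRdiff]
        rw [div_le_div_iff₀ (by positivity) (by positivity)]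
        have hmul : S ω (n₁ + i + d) * S ω (m + d) ≤ S ω (m + d) ^ 2 := by nlinarith
        calc 1 * (S ω (n₁ + i + d) * S ω (m + d)) = S ω (n₁ + i + d) * S ω (m + d) := one_mul _
          _ ≤ S ω (m + d) ^ 2 := hmul
          _ = 1 / ω (m + d) * (ω (m + d) * S ω (m + d) ^ 2) := by field_simp
      have hsq : (δ / (ω (m + d) * S ω (m + d))) ^ 2
          = δ ^ 2 / (ω (m + d) * S ω (m + d)) ^ 2 := by rw [div_pow]
      have hchain : Cf * ω (m + d) * A ^ 2 ≤ Cf * δ ^ 2 * (R i - R (i + 1)) := by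
        have hb1 : Cf * ω (m + d) * A ^ 2 ≤ Cf * ω (m + d) * (δ ^ 2 / (ω (m + d) * S ω (m + d)) ^ 2) := by
          apply mul_le_mul_of_nonneg_left _ (by positivity)
          rw [← hsq]
          exact hA2.le
        have hb2 : Cf * ω (m + d) * (δ ^ 2 / (ω (m + d) * S ω (m + d)) ^ 2)
            = Cf * δ ^ 2 * (1 / (ω (m + d) * S ω (m + d) ^ 2)) := by
          field_simp
        calc Cf * ω (m + d) * A ^ 2 ≤ Cf * ω (m + d) * (δ ^ 2 / (ω (m + d) * S ω (m + d)) ^ 2) := hb1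
          _ = Cf * δ ^ 2 * (1 / (ω (m + d) * S ω (m + d) ^ 2)) := hb2
          _ ≤ Cf * δ ^ 2 * (R i - R (i + 1)) := by
              apply mul_le_mul_of_nonneg_left hRlb (by positivity)
      linarith [hst]
    have htel : ∀ L : ℕ, D n₁ - D (n₁ + L) ≤ Cf * δ ^ 2 * (R 0 - R L) := by
      intro L
      have h1 : ∑ i ∈ Finset.range L, (D (n₁ + i) - D (n₁ + (i + 1)))
          = D (n₁ + 0) - D (n₁ + L) := Finset.sum_range_sub' (fun i => D (n₁ + i)) L
      have h2 : ∑ i ∈ Finset.range L, (R i - R (i + 1)) = R 0 - R L :=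
        Finset.sum_range_sub' R L
      have h3 : ∑ i ∈ Finset.range L, (D (n₁ + i) - D (n₁ + (i + 1)))
          ≤ ∑ i ∈ Finset.range L, Cf * δ ^ 2 * (R i - R (i + 1)) := by
        apply Finset.sum_le_sum
        intro i _
        exact hkey i
      rw [h1, ← Finset.mul_sum, h2] at h3
      simpa using h3
    have hR0pos : 0 < R 0 := hRpos 0
    have hlow : R 0 ≤ D n₁ := by
      have := hDlb n₁
      rw [hR]
      show 1 / S ω (n₁ + 0 + d) ≤ D n₁
      rw [div_le_iff₀ (by simpa using S_pos ω hpos (n₁ + 0 + d))]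
      simpa using this
    obtain ⟨n₂, hn₂⟩ := hcyc (R 0 / 4) (by positivity)
    have hD2 : D (n₁ + n₂) ≤ D n₂ := hDanti (by omega)
    have h3 := htel n₂
    have hRn2 : 0 < R n₂ := hRpos n₂
    rw [hCfδ] at h3
    linarith
  have hfreq' : ∃ᶠ m in Filter.atTop, P m := Filter.frequently_atTop'.2 hfreq
  obtain ⟨φ, hφmono, hφP⟩ := Filter.extraction_of_frequently_atTop hfreq'
  exact ⟨δ, hδpos, φ, hφmono, fun k => hφP k⟩

end
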